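/- Let X, Y be Hilbert spaces, B ∈ Lis(X, Y'), γ₀ ∈ L(X, H) for a Hilbert space H, with [B; γ₀] ∈ Lis(X, Y' × H). Given g ∈ Y' and u₀ ∈ H, the solution u of the minimization problem u = argmin_{w ∈ X} ‖Bw − g‖²_{Y'} + ‖γ₀w − u₀‖²_H exists, is unique, and satisfies the Euler–Lagrange (normal) equation (B'R_Y⁻¹B + γ₀'γ₀)u = B'R_Y⁻¹g + γ₀'u₀, where R_Y : Y → Y' is the Riesz isomorphism. -/

import Mathlib

open RealInnerProductSpace

/-- well-posedness of the least-squares minimization problem and its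
Euler–Lagrange (normal) equations, with the Riesz isomorphism `R_Y`. -/
theorem stmt0
    {X Y H : Type*}
    [NormedAddCommGroup X] [InnerProductSpace ℝ X] [CompleteSpace X]
    [NormedAddCommGroup Y] [InnerProductSpace ℝ Y] [CompleteSpace Y]
    [NormedAddCommGroup H] [InnerProductSpace ℝ H] [CompleteSpace H]
    (B : X →L[ℝ] StrongDual ℝ Y) (γ₀ : X →L[ℝ] H)
    (hiso : ∃ E : X ≃L[ℝ] (StrongDual ℝ Y × H), ∀ x, E x = (B x, γ₀ x))
    (g : StrongDual ℝ Y) (u₀ : H) :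
    (∃! u : X, IsMinOn (fun w => ‖B w - g‖ ^ 2 + ‖γ₀ w - u₀‖ ^ 2) Set.univ u) ∧
    (∀ u : X, IsMinOn (fun w => ‖B w - g‖ ^ 2 + ‖γ₀ w - u₀‖ ^ 2) Set.univ u →
      ∀ w : X,
        ⟪(InnerProductSpace.toDual ℝ Y).symm (B u),
            (InnerProductSpace.toDual ℝ Y).symm (B w)⟫ + ⟪γ₀ u, γ₀ w⟫
          = ⟪(InnerProductSpace.toDual ℝ Y).symm g,
              (InnerProductSpace.toDual ℝ Y).symm (B w)⟫ + ⟪u₀, γ₀ w⟫) := by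
  obtain ⟨E, hE⟩ := hiso
  set u : X := E.symm (g, u₀) with hu
  have hEu : E u = (g, u₀) := E.apply_symm_apply _
  have hBu : B u = g := by
    have h := (hE u).symm.trans hEu
    exact congrArg Prod.fst h
  have hγu : γ₀ u = u₀ := by
    have h := (hE u).symm.trans hEu
    exact congrArg Prod.snd h
  have hfu : ‖B u - g‖ ^ 2 + ‖γ₀ u - u₀‖ ^ 2 = 0 := by
    rw [hBu, hγu]; simp
  have hmin : IsMinOn (fun w => ‖B w - g‖ ^ 2 + ‖γ₀ w - u₀‖ ^ 2) Set.univ u := by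
    rw [isMinOn_iff]
    intro w _
    rw [hfu]
    positivity
  have hchar : ∀ v : X, IsMinOn (fun w => ‖B w - g‖ ^ 2 + ‖γ₀ w - u₀‖ ^ 2) Set.univ v →
      B v = g ∧ γ₀ v = u₀ := by
    intro v hv
    have h1 : ‖B v - g‖ ^ 2 + ‖γ₀ v - u₀‖ ^ 2 ≤ 0 := by
      have := (isMinOn_iff.mp hv) u (Set.mem_univ u)
      simpa [hfu] using this
    have h2 : (0:ℝ) ≤ ‖B v - g‖ ^ 2 := by positivity
    have h3 : (0:ℝ) ≤ ‖γ₀ v - u₀‖ ^ 2 := by positivity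
    have hb2 : ‖B v - g‖ ^ 2 = 0 := le_antisymm (by linarith) h2
    have hg2 : ‖γ₀ v - u₀‖ ^ 2 = 0 := le_antisymm (by linarith) h3
    have hb : ‖B v - g‖ = 0 := by
      simpa using pow_eq_zero_iff (n := 2) (by norm_num) |>.mp hb2
    have hg : ‖γ₀ v - u₀‖ = 0 := by
      simpa using pow_eq_zero_iff (n := 2) (by norm_num) |>.mp hg2
    exact ⟨sub_eq_zero.mp (norm_eq_zero.mp hb), sub_eq_zero.mp (norm_eq_zero.mp hg)⟩
  constructor
  · refine ⟨u, hmin, fun v hv => ?_⟩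
    obtain ⟨hb, hg⟩ := hchar v hv
    have : E v = (g, u₀) := by rw [hE v, hb, hg]
    have := congrArg E.symm this
    simpa [hu] using this
  · intro v hv w
    obtain ⟨hb, hg⟩ := hchar v hv
    rw [hb, hg]
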